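/- Let T be a left-invertible bounded operator on a Hilbert space with 0 ∈ σ(T) and Cauchy dual T' = T(T*T)^{-1}. If σ_r(T') ⊆ closure(𝔻), then 𝔻 ⊆ σ_r(T) \ σ_l(T). -/

import Mathlib

open ContinuousLinearMap

/-- The Cauchy dual `T' = T (T*T)⁻¹` of a left-invertible operator. -/
noncomputable def cauchyDual {H : Type*} [NormedAddCommGroup H] [InnerProductSpace ℂ H]
    [CompleteSpace H] (T : H →L[ℂ] H) : H →L[ℂ] H :=
  T * Ring.inverse (adjoint T * T)

/-- The left spectrum of `T`. -/
def leftSpectrum {H : Type*} [NormedAddCommGroup H] [InnerProductSpace ℂ H] [CompleteSpace H]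
    (T : H →L[ℂ] H) : Set ℂ :=
  {z | ¬ ∃ L : H →L[ℂ] H, L * (T - z • 1) = 1}

/-- The right spectrum of `T`. -/
def rightSpectrum {H : Type*} [NormedAddCommGroup H] [InnerProductSpace ℂ H] [CompleteSpace H]
    (T : H →L[ℂ] H) : Set ℂ :=
  {z | ¬ ∃ R : H →L[ℂ] H, (T - z • 1) * R = 1}

section Aux

variable {H : Type*} [NormedAddCommGroup H] [InnerProductSpace ℂ H] [CompleteSpace H]

local notation "⟪" x ", " y "⟫" => @inner ℂ _ _ x y

set_option linter.unusedSectionVars false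

lemma aux_one_ne_zero [Nontrivial H] : (1 : H →L[ℂ] H) ≠ 0 := by
  rcases exists_ne (0 : H) with ⟨x, hx0⟩
  intro h
  have := congrArg (fun A : H →L[ℂ] H => A x) h
  simp at this
  exact hx0 this

lemma aux_norm_pos [Nontrivial H] {L' X : H →L[ℂ] H} (hL' : L' * X = 1) : 0 < ‖L'‖ := by
  rw [norm_pos_iff]
  intro h0
  rw [h0, zero_mul] at hL'
  exact aux_one_ne_zero hL'.symm

lemma aux_isUnit [Nontrivial H] (T L : H →L[ℂ] H) (hL : L * T = 1) :
    IsUnit (adjoint T * T) := by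
  have hx : ∀ x : H, L (T x) = x := fun x => by
    have := congrArg (fun A : H →L[ℂ] H => A x) hL
    simpa using this
  have hLpos : 0 < ‖L‖ := aux_norm_pos hL
  have hlow : ∀ x : H, ‖x‖ ≤ ‖L‖ * ‖T x‖ := fun x => by
    calc ‖x‖ = ‖L (T x)‖ := by rw [hx x]
    _ ≤ ‖L‖ * ‖T x‖ := L.le_opNorm _
  refine isUnit_of_forall_le_norm_inner_map _ (c := ⟨‖L‖⁻¹ ^ 2, by positivity⟩)
    (by change (0:ℝ) < ‖L‖⁻¹ ^ 2; positivity) (fun x => ?_)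
  have key : ⟪(adjoint T * T) x, x⟫ = (‖T x‖ : ℂ) ^ 2 := by
    rw [ContinuousLinearMap.mul_apply, adjoint_inner_left]
    exact inner_self_eq_norm_sq_to_K _
  rw [key]
  have : ‖((‖T x‖ : ℂ)) ^ 2‖ = ‖T x‖ ^ 2 := by
    rw [norm_pow]; norm_num
  rw [this]
  show ‖x‖ ^ 2 * (‖L‖⁻¹ ^ 2) ≤ _
  have h1 := hlow x
  have h2 : ‖x‖ * ‖L‖⁻¹ ≤ ‖T x‖ := by
    rw [mul_inv_le_iff₀ hLpos, mul_comm]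
    exact h1
  calc ‖x‖ ^ 2 * ‖L‖⁻¹ ^ 2 = (‖x‖ * ‖L‖⁻¹) ^ 2 := by ring
  _ ≤ ‖T x‖ ^ 2 := by
      have hn : 0 ≤ ‖x‖ * ‖L‖⁻¹ := by positivity
      nlinarith

lemma aux_adj_cd (T : H →L[ℂ] H) :
    adjoint (cauchyDual T) = Ring.inverse (adjoint T * T) * adjoint T := by
  rw [← star_eq_adjoint, cauchyDual, star_mul, ← Ring.inverse_star]
  rw [show star (adjoint T * T) = adjoint T * T by
    rw [star_mul, star_eq_adjoint, star_eq_adjoint, adjoint_adjoint], star_eq_adjoint]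

lemma aux_ST [Nontrivial H] (T L : H →L[ℂ] H) (hL : L * T = 1) :
    adjoint (cauchyDual T) * T = 1 := by
  rw [aux_adj_cd, mul_assoc]
  exact Ring.inverse_mul_cancel _ (aux_isUnit T L hL)

/-- Left inverses at every point of the unit ball. -/
lemma aux_left_inv [Nontrivial H] (T L : H →L[ℂ] H) (hL : L * T = 1)
    (h : rightSpectrum (cauchyDual T) ⊆ Metric.closedBall (0 : ℂ) 1)
    {z : ℂ} (hz : z ∈ Metric.ball (0 : ℂ) 1) :
    ∃ L' : H →L[ℂ] H, L' * (T - z • 1) = 1 := by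
  set S := adjoint (cauchyDual T) with hS
  have hST : S * T = 1 := aux_ST T L hL
  rcases eq_or_ne z 0 with rfl | hz0
  · exact ⟨S, by simpa using hST⟩
  · have hmod : 1 < ‖(z⁻¹ : ℂ)‖ := by
      rw [norm_inv]
      rw [Metric.mem_ball, dist_zero_right] at hz
      have h0 : 0 < ‖z‖ := norm_pos_iff.mpr hz0
      exact (one_lt_inv₀ h0).mpr hz
    have hnot : (starRingEnd ℂ) z⁻¹ ∉ rightSpectrum (cauchyDual T) := by
      intro hmem
      have := h hmem
      rw [Metric.mem_closedBall, dist_zero_right] at this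
      rw [show ‖(starRingEnd ℂ) z⁻¹‖ = ‖(z⁻¹ : ℂ)‖ from RCLike.norm_conj _] at this
      linarith
    rw [rightSpectrum, Set.mem_setOf_eq, not_not] at hnot
    obtain ⟨R, hR⟩ := hnot
    have hA : (star R) * (S - z⁻¹ • (1 : H →L[ℂ] H)) = 1 := by
      have := congrArg star hR
      rw [star_mul, star_one, star_sub, star_smul] at this
      rw [starRingEnd_apply, star_star, star_one, star_eq_adjoint] at this
      exact this
    clear_value S
    set A := star R
    refine ⟨(-z)⁻¹ • (A * S), ?_⟩
    have key : S * (T - z • 1) = (-z) • (S - z⁻¹ • (1 : H →L[ℂ] H)) := by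
      rw [mul_sub, hST, mul_smul_comm, mul_one, smul_sub, smul_smul,
        neg_mul, mul_inv_cancel₀ hz0, neg_smul, neg_smul, one_smul, sub_neg_eq_add]
      abel
    rw [smul_mul_assoc, mul_assoc, key, mul_smul_comm, hA, smul_smul,
      inv_mul_cancel₀ (neg_ne_zero.mpr hz0), one_smul]

/-- Perturbation: if `T - z•1` is left invertible and some nearby `T - w•1` is a unit,
then `T - z•1` is a unit. -/
lemma aux_unit_of_nearby [Nontrivial H] (T L' : H →L[ℂ] H) {z w : ℂ}
    (hL' : L' * (T - z • 1) = 1)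
    (hw : dist w z < (2 * ‖L'‖ + 1)⁻¹)
    (hwT : IsUnit (T - w • (1 : H →L[ℂ] H))) :
    IsUnit (T - z • (1 : H →L[ℂ] H)) := by
  haveI : Nontrivial (H →L[ℂ] H) := nontrivial_of_ne _ _ aux_one_ne_zero
  obtain ⟨u, hu⟩ := hwT
  set c := ‖L'‖ with hc
  have hcpos : 0 < c := aux_norm_pos hL'
  set t : H →L[ℂ] H := (z - w) • L' with ht_def
  have hdzw : ‖z - w‖ = dist w z := by rw [dist_comm, dist_eq_norm]
  have ht2 : ‖t‖ < 1 / 2 := by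
    have h1 : ‖t‖ ≤ ‖z - w‖ * c := by
      rw [ht_def]
      exact (norm_smul _ _).le
    have h2 : ‖z - w‖ * c < (2 * c + 1)⁻¹ * c := by
      apply mul_lt_mul_of_pos_right _ hcpos
      rw [hdzw]; exact hw
    have h3 : (2 * c + 1)⁻¹ * c < 1 / 2 := by
      rw [inv_mul_lt_iff₀ (by positivity)]
      nlinarith
    linarith
  have hC : ‖-t‖ < 1 := by rw [norm_neg]; linarith
  set C := Units.oneSub (-t) hC with hCdef
  have hCval : (↑C : H →L[ℂ] H) = 1 + t := by
    rw [hCdef, Units.val_oneSub, sub_neg_eq_add]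
  have hdecomp : T - w • (1 : H →L[ℂ] H) = (T - z • 1) + (z - w) • 1 := by
    rw [sub_smul]; abel
  have hLu : L' * ↑u = ↑C := by
    rw [hu, hdecomp, mul_add, hL', mul_smul_comm, mul_one, hCval, ht_def]
  have hinv : (↑C⁻¹ * L' : H →L[ℂ] H) = ↑u⁻¹ := by
    have h1 : (↑C⁻¹ * L' : H →L[ℂ] H) * ↑u = 1 := by
      rw [mul_assoc, hLu, Units.inv_mul]
    calc (↑C⁻¹ * L' : H →L[ℂ] H) = ((↑C⁻¹ * L') * ↑u) * ↑u⁻¹ := by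
          rw [mul_assoc, u.mul_inv, mul_one]
    _ = ↑u⁻¹ := by rw [h1, one_mul]
  have hCinv_norm : ‖(↑C⁻¹ : H →L[ℂ] H)‖ ≤ 2 := by
    have : (↑C⁻¹ : H →L[ℂ] H) = ∑' n : ℕ, (-t) ^ n := rfl
    rw [this]
    have := tsum_geometric_le_of_norm_lt_one (-t) hC
    rw [norm_one, norm_neg] at this
    have h4 : (1 - ‖t‖)⁻¹ ≤ 2 := by
      rw [inv_le_comm₀ (by linarith) (by norm_num)]
      linarith
    linarith
  have hu_inv_norm : ‖(↑u⁻¹ : H →L[ℂ] H)‖ ≤ 2 * c := by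
    rw [← hinv]
    calc ‖(↑C⁻¹ * L' : H →L[ℂ] H)‖ ≤ ‖(↑C⁻¹ : H →L[ℂ] H)‖ * c := norm_mul_le _ _
    _ ≤ 2 * c := by
        apply mul_le_mul_of_nonneg_right hCinv_norm hcpos.le
  have hupos : 0 < ‖(↑u⁻¹ : H →L[ℂ] H)‖ := Units.norm_pos u⁻¹
  have hnear : ‖(T - z • (1 : H →L[ℂ] H)) - ↑u‖ < ‖(↑u⁻¹ : H →L[ℂ] H)‖⁻¹ := by
    have heq : (T - z • (1 : H →L[ℂ] H)) - ↑u = -((z - w) • 1) := by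
      rw [hu, hdecomp]; abel
    rw [heq, norm_neg, norm_smul, norm_one, mul_one]
    have h5 : ‖(↑u⁻¹ : H →L[ℂ] H)‖ < 2 * c + 1 := by linarith
    calc ‖z - w‖ < (2 * c + 1)⁻¹ := by rw [hdzw]; exact hw
    _ ≤ ‖(↑u⁻¹ : H →L[ℂ] H)‖⁻¹ := inv_anti₀ hupos h5.le
  exact (Units.ofNearby u _ hnear).isUnit

lemma aux_unit_iff (T : H →L[ℂ] H) (z : ℂ) :
    z ∈ spectrum ℂ T ↔ ¬ IsUnit (T - z • (1 : H →L[ℂ] H)) := by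
  rw [spectrum.mem_iff, Algebra.algebraMap_eq_smul_one]
  constructor
  · intro hn hu
    exact hn (by simpa [neg_sub] using hu.neg)
  · intro hn hu
    exact hn (by simpa [neg_sub] using hu.neg)

lemma aux_ball_subset_spectrum [Nontrivial H] (T L : H →L[ℂ] H) (hL : L * T = 1)
    (h0 : (0 : ℂ) ∈ spectrum ℂ T)
    (h : rightSpectrum (cauchyDual T) ⊆ Metric.closedBall (0 : ℂ) 1) :
    Metric.ball (0 : ℂ) 1 ⊆ spectrum ℂ T := by
  by_contra hcon
  rw [Set.not_subset] at hcon
  obtain ⟨x, hxball, hxP⟩ := hcon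
  have hkey : ∀ z ∈ Metric.ball (0 : ℂ) 1, z ∈ spectrum ℂ T →
      z ∈ interior (spectrum ℂ T) := by
    intro z hzb hzP
    obtain ⟨L', hL'⟩ := aux_left_inv T L hL h hzb
    rw [mem_interior_iff_mem_nhds, Metric.mem_nhds_iff]
    refine ⟨(2 * ‖L'‖ + 1)⁻¹, by positivity, fun w hw => ?_⟩
    by_contra hwP
    rw [aux_unit_iff, not_not] at hwP
    have hzu := aux_unit_of_nearby T L' hL' (Metric.mem_ball.mp hw) hwP
    exact (aux_unit_iff T z).mp hzP hzu
  have hconn : IsPreconnected (Metric.ball (0 : ℂ) 1) :=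
    (convex_ball (0 : ℂ) 1).isPreconnected
  obtain ⟨y, hy⟩ := hconn (spectrum ℂ T)ᶜ (interior (spectrum ℂ T))
    (spectrum.isClosed T).isOpen_compl isOpen_interior
    (fun z hz => by
      by_cases hzP : z ∈ spectrum ℂ T
      · exact Or.inr (hkey z hz hzP)
      · exact Or.inl hzP)
    ⟨x, hxball, hxP⟩
    ⟨0, Metric.mem_ball_self one_pos, hkey 0 (Metric.mem_ball_self one_pos) h0⟩
  exact hy.2.1 (interior_subset hy.2.2)

end Aux

/-- If `T` is left-invertible, `0 ∈ σ(T)` and `σ_r(T') ⊆ closure 𝔻`, then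
`𝔻 ⊆ σ_r(T) \ σ_l(T)`. -/
theorem stmt_13 {H : Type*} [NormedAddCommGroup H] [InnerProductSpace ℂ H] [CompleteSpace H]
    (T : H →L[ℂ] H) (hli : ∃ L : H →L[ℂ] H, L * T = 1)
    (h0 : (0 : ℂ) ∈ spectrum ℂ T)
    (h : rightSpectrum (cauchyDual T) ⊆ Metric.closedBall (0 : ℂ) 1) :
    Metric.ball (0 : ℂ) 1 ⊆ rightSpectrum T \ leftSpectrum T := by
  by_cases hs : Subsingleton H
  · exfalso
    rw [spectrum.mem_iff] at h0
    exact h0 (isUnit_of_subsingleton _)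
  · haveI : Nontrivial H := not_subsingleton_iff_nontrivial.mp hs
    obtain ⟨L, hL⟩ := hli
    intro z hz
    obtain ⟨L', hL'⟩ := aux_left_inv T L hL h hz
    have hzP : z ∈ spectrum ℂ T := aux_ball_subset_spectrum T L hL h0 h hz
    constructor
    · simp only [rightSpectrum, Set.mem_setOf_eq]
      rintro ⟨R, hR⟩
      have hLR : L' = R := by
        calc L' = L' * ((T - z • 1) * R) := by rw [hR, mul_one]
        _ = (L' * (T - z • 1)) * R := by rw [mul_assoc]
        _ = R := by rw [hL', one_mul]
      have hunit : IsUnit (T - z • (1 : H →L[ℂ] H)) :=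
        ⟨⟨T - z • 1, R, hR, by rw [← hLR]; exact hL'⟩, rfl⟩
      exact (aux_unit_iff T z).mp hzP hunit
    · simp only [leftSpectrum, Set.mem_setOf_eq, not_not]
      exact ⟨L', hL'⟩
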